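/- Let P(X_1, …, X_n) be a polynomial over ℂ that is symmetric in X_1, …, X_n. Then P(E_{k_1}, …, E_{k_n}) applied to the polynomial ∏_{1 ≤ i < j ≤ n} (k_j − k_i)/(j − i) equals P(1, 1, …, 1) · ∏_{1 ≤ i < j ≤ n} (k_j − k_i)/(j − i). -/

import Mathlib

open MvPolynomial Finset

/-- The shift of a polynomial by an integer vector `a`:
`(shiftPolyC a p)(x₁,…,xₙ) = p(x₁ + a₁, …, xₙ + aₙ)`. -/
noncomputable def shiftPolyC {n : ℕ} (a : Fin n → ℤ) (p : MvPolynomial (Fin n) ℂ) :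
    MvPolynomial (Fin n) ℂ :=
  aeval (fun j => X j + C ((a j : ℂ))) p

/-- A Laurent polynomial `Q` in the commuting shift operators `E₁,…,Eₙ` (an element of the
group algebra `ℂ[ℤⁿ]`, the exponent vector recording the shift) acts on polynomials. -/
noncomputable def opApplyC {n : ℕ} (Q : AddMonoidAlgebra ℂ (Fin n → ℤ))
    (p : MvPolynomial (Fin n) ℂ) : MvPolynomial (Fin n) ℂ :=
  Q.coeff.sum fun a c => c • shiftPolyC a p

/-- The shift operator `E_{k_i}` as an element of the operator algebra. -/
noncomputable def EshC {n : ℕ} (i : Fin n) : AddMonoidAlgebra ℂ (Fin n → ℤ) :=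
  AddMonoidAlgebra.single (Pi.single i 1) 1

/-- The inverse shift operator `E_{k_i}⁻¹`. -/
noncomputable def EshInvC {n : ℕ} (i : Fin n) : AddMonoidAlgebra ℂ (Fin n → ℤ) :=
  AddMonoidAlgebra.single (Pi.single i (-1)) 1

/-- The difference operator `Δ_{k_i} = E_{k_i} - id`. -/
noncomputable def DltC {n : ℕ} (i : Fin n) : AddMonoidAlgebra ℂ (Fin n → ℤ) :=
  EshC i - 1

/-- All pairs `(p, q)` with `p < q`. -/
def pairs (n : ℕ) : Finset (Fin n × Fin n) :=
  Finset.univ.filter fun p => p.1 < p.2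

/-- The polynomial `∏_{1 ≤ i < j ≤ n} (k_j - k_i) / (j - i)`. -/
noncomputable def vandC (n : ℕ) : MvPolynomial (Fin n) ℂ :=
  ∏ p ∈ pairs n, (C ((((p.2 : ℕ) : ℂ) - ((p.1 : ℕ) : ℂ))⁻¹) * (X p.2 - X p.1))

namespace SymVandAux

variable {n : ℕ}

/-! ### Rename commutation lemmas -/

lemma rename_shiftPolyC (σ : Equiv.Perm (Fin n)) (a : Fin n → ℤ)
    (p : MvPolynomial (Fin n) ℂ) :
    rename ⇑σ (shiftPolyC a p) = shiftPolyC (a ∘ ⇑σ⁻¹) (rename ⇑σ p) := by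
  unfold shiftPolyC
  rw [comp_aeval_apply, aeval_rename]
  have hfun : (fun i => rename ⇑σ (X i + C ((a i : ℂ))))
      = ((fun j => X j + C (((a ∘ ⇑σ⁻¹) j : ℤ) : ℂ)) ∘ ⇑σ) := by
    funext j
    simp [Function.comp, Equiv.Perm.inv_def]
  rw [hfun]

lemma comp_inv_injective (σ : Equiv.Perm (Fin n)) :
    Function.Injective (fun a : Fin n → ℤ => a ∘ ⇑σ⁻¹) := by
  intro a b h
  funext j
  have := congrFun h (σ j)
  simpa using this

lemma rename_opApplyC (σ : Equiv.Perm (Fin n)) (Q : AddMonoidAlgebra ℂ (Fin n → ℤ))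
    (p : MvPolynomial (Fin n) ℂ) :
    rename ⇑σ (opApplyC Q p) =
      opApplyC (AddMonoidAlgebra.mapDomain (fun a => a ∘ ⇑σ⁻¹) Q) (rename ⇑σ p) := by
  unfold opApplyC
  rw [AddMonoidAlgebra.mapDomain, AddMonoidAlgebra.coeff_ofCoeff]
  rw [Finsupp.sum_mapDomain_index_inj (comp_inv_injective σ), map_finsuppSum]
  exact Finsupp.sum_congr fun a _ => by
    rw [map_smul, rename_shiftPolyC]

/-- The permutation `σ` acting on exponent vectors, as an `AddMonoidHom`. -/
def permHom (σ : Equiv.Perm (Fin n)) : (Fin n → ℤ) →+ (Fin n → ℤ) where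
  toFun a := a ∘ ⇑σ⁻¹
  map_zero' := rfl
  map_add' _ _ := rfl

lemma mapDomain_aeval_EshC (σ : Equiv.Perm (Fin n)) (P : MvPolynomial (Fin n) ℂ)
    (hP : P.IsSymmetric) :
    AddMonoidAlgebra.mapDomain (fun a : Fin n → ℤ => a ∘ ⇑σ⁻¹)
        (aeval (fun i : Fin n => EshC i) P) = aeval (fun i : Fin n => EshC i) P := by
  have h1 : AddMonoidAlgebra.mapDomain (fun a : Fin n → ℤ => a ∘ ⇑σ⁻¹)
        (aeval (fun i : Fin n => EshC i) P)
      = AddMonoidAlgebra.mapDomainAlgHom ℂ ℂ (permHom σ)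
          (aeval (fun i : Fin n => EshC i) P) := rfl
  rw [h1, comp_aeval_apply]
  conv_rhs => rw [← hP σ, aeval_rename]
  have hfun : (fun i : Fin n => AddMonoidAlgebra.mapDomainAlgHom ℂ ℂ (permHom σ) (EshC i))
      = ((fun i : Fin n => EshC i) ∘ ⇑σ) := by
    funext i
    show AddMonoidAlgebra.mapDomainAlgHom ℂ ℂ (permHom σ)
        (AddMonoidAlgebra.single (Pi.single i 1) 1) = EshC (σ i)
    rw [AddMonoidAlgebra.mapDomainAlgHom_apply, AddMonoidAlgebra.mapDomain_single]
    unfold EshC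
    congr 1
    funext k
    simp only [permHom, AddMonoidHom.coe_mk, ZeroHom.coe_mk, Function.comp_apply]
    rw [Pi.single_apply, Pi.single_apply]
    rcases eq_or_ne k (σ i) with rfl | hk2
    · rw [if_pos (by simp), if_pos rfl]
    · rw [if_neg (fun h => hk2 (by rw [← h]; simp)), if_neg hk2]
  rw [hfun]

/-! ### The augmentation -/

noncomputable def augC (n : ℕ) : AddMonoidAlgebra ℂ (Fin n → ℤ) →ₐ[ℂ] ℂ :=
  AddMonoidAlgebra.lift ℂ ℂ (Fin n → ℤ) 1

lemma augC_single (a : Fin n → ℤ) (c : ℂ) :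
    augC n (AddMonoidAlgebra.single a c) = c := by
  rw [augC, AddMonoidAlgebra.lift_single]
  simp

lemma augC_eq_sum (Q : AddMonoidAlgebra ℂ (Fin n → ℤ)) :
    augC n Q = Q.coeff.sum fun _ c => c := by
  rw [augC, AddMonoidAlgebra.lift_apply]
  simp

lemma augC_aeval_EshC (P : MvPolynomial (Fin n) ℂ) :
    augC n (aeval (fun i : Fin n => EshC i) P) = eval (fun _ : Fin n => (1 : ℂ)) P := by
  rw [comp_aeval_apply]
  have h1 : ∀ i : Fin n, augC n (EshC i) = 1 := fun i => augC_single _ _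
  have h2 : eval (fun _ : Fin n => (1 : ℂ)) P = aeval (fun _ : Fin n => (1 : ℂ)) P := by
    rw [← coe_aeval_eq_eval]; rfl
  rw [h2]
  have hfun : (fun i : Fin n => augC n (EshC i)) = (fun _ : Fin n => (1 : ℂ)) := by
    funext i
    exact h1 i
  rw [hfun]

/-! ### Degree bounds -/

lemma totalDegree_shift_monomial_sub (a : Fin n → ℤ) :
    ∀ (N : ℕ) (α : Fin n →₀ ℕ), (α.sum fun _ e => e) = N →
      shiftPolyC a (monomial α 1) - monomial α (1 : ℂ) = 0 ∨
      (shiftPolyC a (monomial α 1) - monomial α (1 : ℂ)).totalDegree < N := by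
  intro N
  induction N using Nat.strong_induction_on with
  | _ N ih =>
    intro α hα
    by_cases h0 : α = 0
    · left
      subst h0
      have h1 : (monomial (0 : Fin n →₀ ℕ) (1 : ℂ)) = (1 : MvPolynomial (Fin n) ℂ) := by
        simp
      rw [h1, sub_eq_zero]
      exact map_one (aeval _)
    · right
      obtain ⟨j, hj⟩ : ∃ j, α j ≠ 0 := by
        by_contra h
        push_neg at h
        exact h0 (Finsupp.ext h)
      set α' : Fin n →₀ ℕ := α - Finsupp.single j 1 with hα'
      have hdecomp : α = α' + Finsupp.single j 1 := by
        ext k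
        rw [Finsupp.add_apply, hα', Finsupp.tsub_apply, Finsupp.single_apply]
        rcases eq_or_ne j k with rfl | hk
        · simp
          omega
        · simp [hk]
      have hNsucc : (α'.sum fun _ e => e) + 1 = N := by
        rw [← hα, hdecomp, Finsupp.sum_add_index (by simp) (by simp)]
        rw [Finsupp.sum_single_index rfl]
      set N' := α'.sum fun _ e => e with hN'
      have hmon : monomial α (1 : ℂ) = monomial α' 1 * X j := by
        rw [hdecomp, monomial_add_single, pow_one]
      have hshift : shiftPolyC a (monomial α 1)
          = shiftPolyC a (monomial α' 1) * (X j + C ((a j : ℂ))) := by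
        rw [hmon]
        unfold shiftPolyC
        rw [map_mul, aeval_X]
      set D' := shiftPolyC a (monomial α' (1 : ℂ)) - monomial α' (1 : ℂ) with hD'
      have hkey : shiftPolyC a (monomial α 1) - monomial α (1 : ℂ)
          = monomial α' 1 * C ((a j : ℂ)) + D' * (X j + C ((a j : ℂ))) := by
        rw [hshift, hmon, hD']
        ring
      rw [hkey]
      have hXC : (X j + C ((a j : ℂ)) : MvPolynomial (Fin n) ℂ).totalDegree ≤ 1 := by
        refine (totalDegree_add _ _).trans (max_le ?_ ?_)
        · exact le_of_eq (totalDegree_X j)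
        · rw [totalDegree_C]
          omega
      have hterm1 : (monomial α' (1 : ℂ) * C ((a j : ℂ))).totalDegree < N := by
        refine lt_of_le_of_lt ((totalDegree_mul _ _).trans ?_) (by omega : N' + 0 < N)
        gcongr
        · exact totalDegree_monomial_le _ _
        · exact le_of_eq (totalDegree_C _)
      have hterm2 : (D' * (X j + C ((a j : ℂ)))).totalDegree < N := by
        rcases ih N' (by omega) α' rfl with h | h
        · rw [← hD'] at h
          rw [h, zero_mul, totalDegree_zero]
          omega
        · rw [← hD'] at h
          refine lt_of_le_of_lt (totalDegree_mul _ _) ?_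
          omega
      exact lt_of_le_of_lt (totalDegree_add _ _) (max_lt hterm1 hterm2)

lemma totalDegree_shift_sub_lt (a : Fin n → ℤ) (p : MvPolynomial (Fin n) ℂ) (d : ℕ)
    (hd : 1 ≤ d) (hp : p.totalDegree ≤ d) :
    (shiftPolyC a p - p).totalDegree < d := by
  have hrepr : shiftPolyC a p - p
      = ∑ α ∈ p.support, (shiftPolyC a (monomial α (coeff α p)) - monomial α (coeff α p)) := by
    rw [Finset.sum_sub_distrib]
    congr 1
    · conv_lhs => rw [← p.support_sum_monomial_coeff]
      unfold shiftPolyC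
      rw [map_sum]
    · exact (p.support_sum_monomial_coeff).symm
  rw [hrepr]
  refine lt_of_le_of_lt (totalDegree_finset_sum _ _) ?_
  rw [Finset.sup_lt_iff (show (⊥ : ℕ) < d from hd)]
  intro α hα
  have hmono : monomial α (coeff α p) = C (coeff α p) * monomial α 1 := by
    rw [C_mul_monomial, mul_one]
  have hCmul : shiftPolyC a (monomial α (coeff α p)) - monomial α (coeff α p)
      = C (coeff α p) * (shiftPolyC a (monomial α 1) - monomial α 1) := by
    rw [hmono]
    unfold shiftPolyC
    rw [map_mul, aeval_C]
    simp only [algebraMap_eq]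
    ring
  rw [hCmul]
  rcases totalDegree_shift_monomial_sub a (α.sum fun _ e => e) α rfl with h | h
  · rw [h, mul_zero, totalDegree_zero]
    omega
  · have h2 : (α.sum fun _ e => e) ≤ d := (le_totalDegree hα).trans hp
    calc (C (coeff α p) * (shiftPolyC a (monomial α 1) - monomial α 1)).totalDegree
        ≤ (C (coeff α p)).totalDegree
            + (shiftPolyC a (monomial α 1) - monomial α 1).totalDegree :=
          totalDegree_mul _ _
      _ < d := by rw [totalDegree_C]; omega

lemma totalDegree_vandC_le : (vandC n).totalDegree ≤ (pairs n).card := by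
  unfold vandC
  refine (totalDegree_finset_prod _ _).trans ?_
  have hb : ∀ p ∈ pairs n,
      (C ((((p.2 : ℕ) : ℂ) - ((p.1 : ℕ) : ℂ))⁻¹) * (X p.2 - X p.1)
        : MvPolynomial (Fin n) ℂ).totalDegree ≤ 1 := by
    intro p _
    refine (totalDegree_mul _ _).trans ?_
    have h1 : (C ((((p.2 : ℕ) : ℂ) - ((p.1 : ℕ) : ℂ))⁻¹)
        : MvPolynomial (Fin n) ℂ).totalDegree = 0 := totalDegree_C _
    have h2 : (X p.2 - X p.1 : MvPolynomial (Fin n) ℂ).totalDegree ≤ 1 := by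
      rw [sub_eq_add_neg]
      refine (totalDegree_add _ _).trans (max_le ?_ ?_)
      · exact le_of_eq (totalDegree_X _)
      · rw [totalDegree_neg]
        exact le_of_eq (totalDegree_X _)
    omega
  calc ∑ p ∈ pairs n, (C ((((p.2 : ℕ) : ℂ) - ((p.1 : ℕ) : ℂ))⁻¹) * (X p.2 - X p.1)
        : MvPolynomial (Fin n) ℂ).totalDegree
      ≤ ∑ _p ∈ pairs n, 1 := Finset.sum_le_sum hb
    _ = (pairs n).card := by simp

/-! ### `pairs` counting -/

lemma prod_pairs {M : Type*} [CommMonoid M] (f : Fin n × Fin n → M) :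
    ∏ p ∈ pairs n, f p = ∏ i : Fin n, ∏ j ∈ Ioi i, f (i, j) := by
  classical
  rw [pairs, Finset.prod_filter, ← Finset.univ_product_univ, Finset.prod_product]
  refine Finset.prod_congr rfl fun i _ => ?_
  rw [← Finset.filter_lt_eq_Ioi, Finset.prod_filter]

lemma card_pairs : (pairs n).card = ∑ j : Fin n, (j : ℕ) := by
  classical
  rw [Finset.card_eq_sum_ones, pairs, Finset.sum_filter, ← Finset.univ_product_univ,
    Finset.sum_product_right]
  refine Finset.sum_congr rfl fun j _ => ?_
  rw [← Finset.sum_filter, ← Finset.card_eq_sum_ones, Finset.filter_gt_eq_Iio, Fin.card_Iio]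

lemma sum_finset_nat_ge : ∀ (m : ℕ) (S : Finset ℕ), S.card = m →
    ∑ j ∈ Finset.range m, j ≤ ∑ x ∈ S, x := by
  intro m
  induction m with
  | zero => intro S _; simp
  | succ m ih =>
    intro S hS
    have hne : S.Nonempty := Finset.card_pos.mp (by omega)
    set M := S.max' hne with hM
    have hMem : M ∈ S := S.max'_mem hne
    have hSub : S ⊆ Finset.range (M + 1) := by
      intro x hx
      rw [Finset.mem_range]
      exact Nat.lt_succ_of_le (S.le_max' x hx)
    have hcard : m ≤ M := by
      have := Finset.card_le_card hSub
      rw [Finset.card_range] at this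
      omega
    have herase : (S.erase M).card = m := by
      rw [Finset.card_erase_of_mem hMem, hS]
      omega
    have hsplit : ∑ x ∈ S, x = M + ∑ x ∈ S.erase M, x :=
      (Finset.add_sum_erase S id hMem).symm
    rw [Finset.sum_range_succ, hsplit]
    have := ih (S.erase M) herase
    omega

lemma card_pairs_le_sum {α : Fin n →₀ ℕ} (hα : Function.Injective ⇑α) :
    (pairs n).card ≤ α.sum fun _ e => e := by
  rw [card_pairs]
  have hsum : (α.sum fun _ e => e) = ∑ j : Fin n, α j := by
    rw [Finsupp.sum]
    exact Finset.sum_subset (Finset.subset_univ _)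
      (fun x _ hx => Finsupp.notMem_support_iff.mp hx)
  rw [hsum]
  have himg : ∑ x ∈ Finset.univ.image ⇑α, x = ∑ j : Fin n, α j :=
    Finset.sum_image fun x _ y _ h => hα h
  rw [← himg]
  have hcard : (Finset.univ.image ⇑α).card = n := by
    rw [Finset.card_image_of_injective _ hα, Finset.card_univ, Fintype.card_fin]
  calc ∑ j : Fin n, (j : ℕ) = ∑ j ∈ Finset.range n, j := Fin.sum_univ_eq_sum_range (fun j => j) n
    _ = ∑ j ∈ Finset.range (Finset.univ.image ⇑α).card, j := by rw [hcard]
    _ ≤ ∑ x ∈ Finset.univ.image ⇑α, x := sum_finset_nat_ge _ _ rfl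

/-! ### Antisymmetry of the Vandermonde -/

lemma eval_vandC (x : Fin n → ℂ) :
    eval x (vandC n) =
      (∏ p ∈ pairs n, ((((p.2 : ℕ) : ℂ) - ((p.1 : ℕ) : ℂ))⁻¹)) * (Matrix.vandermonde x).det := by
  rw [Matrix.det_vandermonde]
  unfold vandC
  rw [map_prod]
  have : ∀ p ∈ pairs n,
      eval x (C ((((p.2 : ℕ) : ℂ) - ((p.1 : ℕ) : ℂ))⁻¹) * (X p.2 - X p.1))
        = ((((p.2 : ℕ) : ℂ) - ((p.1 : ℕ) : ℂ))⁻¹) * (x p.2 - x p.1) := by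
    intro p _
    simp
  rw [Finset.prod_congr rfl this, Finset.prod_mul_distrib]
  congr 1
  rw [prod_pairs fun p => x p.2 - x p.1]

lemma rename_swap_vandC {i j : Fin n} (hij : i ≠ j) :
    rename ⇑(Equiv.swap i j) (vandC n) = - vandC n := by
  apply MvPolynomial.funext
  intro x
  rw [eval_rename, map_neg, eval_vandC, eval_vandC]
  have hv : Matrix.vandermonde (x ∘ ⇑(Equiv.swap i j))
      = (Matrix.vandermonde x).submatrix (⇑(Equiv.swap i j)) id := by
    ext a b
    simp [Matrix.vandermonde]
  rw [hv]
  have hdet : ((Matrix.vandermonde x).submatrix (⇑(Equiv.swap i j)) id).det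
      = - (Matrix.vandermonde x).det := by
    rw [Matrix.det_permute, Equiv.Perm.sign_swap hij]
    simp
  rw [hdet]
  ring

/-! ### opApplyC linearity helpers -/

lemma opApplyC_neg (Q : AddMonoidAlgebra ℂ (Fin n → ℤ)) (p : MvPolynomial (Fin n) ℂ) :
    opApplyC Q (-p) = - opApplyC Q p := by
  unfold opApplyC
  rw [Finsupp.sum, Finsupp.sum, ← Finset.sum_neg_distrib]
  refine Finset.sum_congr rfl fun a _ => ?_
  unfold shiftPolyC
  rw [map_neg, smul_neg]

end SymVandAux

open SymVandAux in
/-- For symmetric `P`, `P(E_{k_1},…,E_{k_n})` acts on `∏_{i<j} (k_j - k_i)/(j - i)` as the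
scalar `P(1,…,1)`. -/
theorem symmetric_operator_on_vandermonde (n : ℕ) (P : MvPolynomial (Fin n) ℂ)
    (hP : P.IsSymmetric) :
    opApplyC (aeval (fun i : Fin n => EshC i) P) (vandC n) =
      C (eval (fun _ : Fin n => (1 : ℂ)) P) * vandC n := by
  classical
  set Q := aeval (fun i : Fin n => EshC i) P with hQ
  set V := vandC n with hV
  rw [← sub_eq_zero]
  set g := opApplyC Q V - C (eval (fun _ : Fin n => (1 : ℂ)) P) * V with hg
  show g = 0
  -- (a) expansion of g as a sum of low-degree terms
  have hexp : g = Q.coeff.sum fun a c => c • (shiftPolyC a V - V) := by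
    have hCV : C (eval (fun _ : Fin n => (1 : ℂ)) P) * V = Q.coeff.sum fun _ c => c • V := by
      rw [← augC_aeval_EshC P, ← hQ, ← MvPolynomial.smul_eq_C_mul, augC_eq_sum,
        Finsupp.sum, Finsupp.sum, Finset.sum_smul]
    rw [hg, hCV]
    unfold opApplyC
    rw [Finsupp.sum, Finsupp.sum, Finsupp.sum, ← Finset.sum_sub_distrib]
    exact Finset.sum_congr rfl fun a _ => (smul_sub _ _ _).symm
  by_cases hn : pairs n = ∅
  · have hV1 : V = 1 := by rw [hV, vandC, hn, Finset.prod_empty]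
    rw [hexp, hV1]
    have hsh : ∀ a : Fin n → ℤ, shiftPolyC a (1 : MvPolynomial (Fin n) ℂ) = 1 :=
      fun a => map_one (aeval _)
    simp [hsh]
  · have hN : 1 ≤ (pairs n).card :=
      Finset.card_pos.mpr (Finset.nonempty_of_ne_empty hn)
    -- (b) degree bound
    have hdeg : g.totalDegree < (pairs n).card := by
      rw [hexp, Finsupp.sum]
      refine lt_of_le_of_lt (totalDegree_finset_sum _ _) ?_
      rw [Finset.sup_lt_iff (show (⊥ : ℕ) < (pairs n).card from hN)]
      intro a _
      refine lt_of_le_of_lt (totalDegree_smul_le _ _) ?_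
      exact totalDegree_shift_sub_lt a V _ hN (hV ▸ totalDegree_vandC_le)
    -- (c) alternation
    have halt : ∀ (i j : Fin n), i ≠ j → rename ⇑(Equiv.swap i j) g = - g := by
      intro i j hij
      have h1 : rename ⇑(Equiv.swap i j) (opApplyC Q V) = - opApplyC Q V := by
        rw [rename_opApplyC (Equiv.swap i j) Q V,
          mapDomain_aeval_EshC (Equiv.swap i j) P hP, ← hQ,
          rename_swap_vandC hij, ← hV, opApplyC_neg]
      have h2 : rename ⇑(Equiv.swap i j) (C (eval (fun _ : Fin n => (1 : ℂ)) P) * V)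
          = - (C (eval (fun _ : Fin n => (1 : ℂ)) P) * V) := by
        rw [map_mul, rename_C, rename_swap_vandC hij, ← hV]
        ring
      rw [hg, map_sub, h1, h2]
      ring
    -- (d) conclude coefficientwise
    apply MvPolynomial.ext
    intro α
    rw [coeff_zero]
    by_cases hinj : Function.Injective ⇑α
    · by_contra hc
      have hmem : α ∈ g.support := by
        rw [MvPolynomial.mem_support_iff]
        exact hc
      have h1 : (α.sum fun _ e => e) ≤ g.totalDegree := le_totalDegree hmem
      have h2 : (pairs n).card ≤ α.sum fun _ e => e := card_pairs_le_sum hinj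
      omega
    · obtain ⟨i, j, hval, hij⟩ := Function.not_injective_iff.mp hinj
      have hmap : Finsupp.mapDomain (⇑(Equiv.swap i j)) α = α := by
        ext k
        conv_lhs => rw [show k = (Equiv.swap i j) ((Equiv.swap i j) k) by simp]
        rw [Finsupp.mapDomain_apply (Equiv.injective _)]
        rcases eq_or_ne k i with rfl | hki
        · rw [Equiv.swap_apply_left]
          exact hval.symm
        · rcases eq_or_ne k j with rfl | hkj
          · rw [Equiv.swap_apply_right]
            exact hval
          · rw [Equiv.swap_apply_of_ne_of_ne hki hkj]
      have hcoeff := coeff_rename_mapDomain (⇑(Equiv.swap i j)) (Equiv.injective _) g α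
      rw [halt i j hij, hmap, coeff_neg] at hcoeff
      have h0 : coeff α g + coeff α g = 0 := by
        nth_rewrite 1 [← hcoeff]
        exact neg_add_cancel _
      exact add_self_eq_zero.mp h0
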